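/- arXiv:1010.1163 — 2 statements merged into one kernel-verified Lean document; each statement's English description precedes it below -/
import Mathlib

section
/- Let M ≥ 1 and let x : Fin M → ℂ be injective. Define the constellation-constrained mutual information I_σ(s) = log₂ M − log₂ e − (1/M)·Σ_{i=0}^{M−1} g_i(σ, s). Then for every σ > 0, I_σ(s) → log₂ M as s → ∞. -/
open MeasureTheory Real Filter
open scoped ENNReal NNReal

/-- The standard complex Gaussian probability measure on ℂ:
density `w ↦ (1/π)·exp(−|w|²)` with respect to Lebesgue measure on ℂ ≅ ℝ². -/
noncomputable def gaussianC : Measure ℂ :=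
  MeasureTheory.volume.withDensity
    (fun w => ENNReal.ofReal (π⁻¹ * Real.exp (-(‖w‖) ^ 2)))


lemma int1d_gauss : ∫ x : ℝ, Real.exp (-x ^ 2) = Real.sqrt π := by
  simpa using integral_gaussian 1

lemma integrable1d_gauss : Integrable (fun x : ℝ => Real.exp (-x ^ 2)) := by
  simpa using integrable_exp_neg_mul_sq (one_pos)

lemma integrable1d_sq_gauss : Integrable (fun x : ℝ => x ^ 2 * Real.exp (-x ^ 2)) := by
  have := integrable_rpow_mul_exp_neg_mul_sq (b := 1) one_pos (s := 2) (by norm_num)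
  simpa [Real.rpow_natCast] using this

lemma int1d_sq_gauss : ∫ x : ℝ, x ^ 2 * Real.exp (-x ^ 2) = Real.sqrt π / 2 := by
  have h1 : ∫ x : ℝ, x ^ 2 * Real.exp (-x ^ 2)
      = ∫ x : ℝ, (fun t => t ^ 2 * Real.exp (-t ^ 2)) |x| := by
    congr 1; funext x; simp [sq_abs]
  rw [h1, integral_comp_abs (f := fun t => t ^ 2 * Real.exp (-t ^ 2))]
  have h2 : ∫ x in Set.Ioi (0:ℝ), x ^ 2 * Real.exp (-x ^ 2)
      = ∫ x in Set.Ioi (0:ℝ), x ^ (2:ℝ) * Real.exp (-x ^ (2:ℝ)) := by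
    refine setIntegral_congr_fun measurableSet_Ioi (fun x hx => ?_)
    rw [show ((2:ℝ) = ((2:ℕ):ℝ)) by norm_num, Real.rpow_natCast]
  rw [h2, integral_rpow_mul_exp_neg_rpow two_pos (by norm_num)]
  have : ((2:ℝ) + 1) / 2 = 1/2 + 1 := by norm_num
  rw [this, Real.Gamma_add_one (by norm_num), Real.Gamma_one_half_eq]
  ring

lemma integral_complex_eq (f : ℂ → ℝ) :
    ∫ w : ℂ, f w = ∫ p : ℝ × ℝ, f ⟨p.1, p.2⟩ := by
  rw [← (Complex.volume_preserving_equiv_real_prod.symm).integral_comp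
    Complex.measurableEquivRealProd.symm.measurableEmbedding f]
  rfl

lemma integrable_complex_iff (f : ℂ → ℝ) :
    Integrable f (volume : Measure ℂ) ↔
      Integrable (fun p : ℝ × ℝ => f ⟨p.1, p.2⟩) (volume : Measure (ℝ × ℝ)) := by
  rw [← (Complex.volume_preserving_equiv_real_prod.symm).integrable_comp_emb
    Complex.measurableEquivRealProd.symm.measurableEmbedding]
  rfl

lemma abs_mk_sq (p : ℝ × ℝ) :
    ‖(⟨p.1, p.2⟩ : ℂ)‖ ^ 2 = p.1 ^ 2 + p.2 ^ 2 := by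
  rw [Complex.sq_norm]
  simp [Complex.normSq_mk]
  ring

lemma intC_gauss : ∫ w : ℂ, Real.exp (-(‖w‖) ^ 2) = π := by
  rw [integral_complex_eq]
  have : ∀ p : ℝ × ℝ, Real.exp (-(‖(⟨p.1, p.2⟩ : ℂ)‖) ^ 2)
      = Real.exp (-p.1 ^ 2) * Real.exp (-p.2 ^ 2) := by
    intro p; rw [abs_mk_sq, ← Real.exp_add]; ring_nf
  simp_rw [this]
  rw [MeasureTheory.Measure.volume_eq_prod, integral_prod_mul (f := fun a : ℝ => Real.exp (-a ^ 2)) (g := fun a : ℝ => Real.exp (-a ^ 2)), int1d_gauss]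
  exact Real.mul_self_sqrt pi_pos.le

lemma integrableC_gauss : Integrable (fun w : ℂ => Real.exp (-(‖w‖) ^ 2)) := by
  rw [integrable_complex_iff]
  have : (fun p : ℝ × ℝ => Real.exp (-(‖(⟨p.1, p.2⟩ : ℂ)‖) ^ 2))
      = fun p : ℝ × ℝ => Real.exp (-p.1 ^ 2) * Real.exp (-p.2 ^ 2) := by
    funext p; rw [abs_mk_sq, ← Real.exp_add]; ring_nf
  rw [this, MeasureTheory.Measure.volume_eq_prod]
  exact integrable1d_gauss.mul_prod integrable1d_gauss

lemma integrableC_sq_gauss :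
    Integrable (fun w : ℂ => ‖w‖ ^ 2 * Real.exp (-(‖w‖) ^ 2)) := by
  rw [integrable_complex_iff]
  have : (fun p : ℝ × ℝ => ‖(⟨p.1, p.2⟩ : ℂ)‖ ^ 2 * Real.exp (-(‖(⟨p.1, p.2⟩ : ℂ)‖) ^ 2))
      = fun p : ℝ × ℝ => (p.1 ^ 2 * Real.exp (-p.1 ^ 2)) * Real.exp (-p.2 ^ 2)
          + Real.exp (-p.1 ^ 2) * (p.2 ^ 2 * Real.exp (-p.2 ^ 2)) := by
    funext p; rw [abs_mk_sq]
    rw [show -(p.1 ^ 2 + p.2 ^ 2) = -p.1 ^ 2 + -p.2 ^ 2 by ring, Real.exp_add]; ring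
  rw [this, MeasureTheory.Measure.volume_eq_prod]
  exact (integrable1d_sq_gauss.mul_prod integrable1d_gauss).add
    (integrable1d_gauss.mul_prod integrable1d_sq_gauss)

lemma intC_sq_gauss : ∫ w : ℂ, ‖w‖ ^ 2 * Real.exp (-(‖w‖) ^ 2) = π := by
  rw [integral_complex_eq]
  have : (fun p : ℝ × ℝ => ‖(⟨p.1, p.2⟩ : ℂ)‖ ^ 2 * Real.exp (-(‖(⟨p.1, p.2⟩ : ℂ)‖) ^ 2))
      = fun p : ℝ × ℝ => (p.1 ^ 2 * Real.exp (-p.1 ^ 2)) * Real.exp (-p.2 ^ 2)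
          + Real.exp (-p.1 ^ 2) * (p.2 ^ 2 * Real.exp (-p.2 ^ 2)) := by
    funext p; rw [abs_mk_sq]
    rw [show -(p.1 ^ 2 + p.2 ^ 2) = -p.1 ^ 2 + -p.2 ^ 2 by ring, Real.exp_add]; ring
  rw [this, MeasureTheory.Measure.volume_eq_prod,
    integral_add (integrable1d_sq_gauss.mul_prod integrable1d_gauss)
      (integrable1d_gauss.mul_prod integrable1d_sq_gauss),
    integral_prod_mul (f := fun a : ℝ => a ^ 2 * Real.exp (-a ^ 2))
      (g := fun a : ℝ => Real.exp (-a ^ 2)),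
    integral_prod_mul (f := fun a : ℝ => Real.exp (-a ^ 2))
      (g := fun a : ℝ => a ^ 2 * Real.exp (-a ^ 2)),
    int1d_gauss, int1d_sq_gauss]
  rw [show √π / 2 * √π + √π * (√π / 2) = √π * √π by ring, Real.mul_self_sqrt pi_pos.le]

lemma rho_cont : Continuous (fun w : ℂ => π⁻¹ * Real.exp (-(‖w‖) ^ 2)) := by
  exact continuous_const.mul (Real.continuous_exp.comp (((continuous_pow 2).comp continuous_norm).neg))

lemma rho_nonneg (w : ℂ) : 0 ≤ π⁻¹ * Real.exp (-(‖w‖) ^ 2) :=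
  mul_nonneg (inv_nonneg.2 pi_pos.le) (Real.exp_pos _).le

lemma int_rho : ∫ w : ℂ, π⁻¹ * Real.exp (-(‖w‖) ^ 2) = 1 := by
  rw [integral_const_mul, intC_gauss, inv_mul_cancel₀ pi_pos.ne']

instance gaussianC_prob : IsProbabilityMeasure gaussianC := by
  constructor
  rw [gaussianC, withDensity_apply _ MeasurableSet.univ, setLIntegral_univ,
    ← ofReal_integral_eq_lintegral_ofReal
      (integrableC_gauss.const_mul _) (Filter.Eventually.of_forall rho_nonneg),
    int_rho, ENNReal.ofReal_one]

lemma gaussianC_integral_eq (f : ℂ → ℝ) :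
    ∫ w, f w ∂gaussianC = ∫ w : ℂ, (π⁻¹ * Real.exp (-(‖w‖) ^ 2)) * f w := by
  rw [gaussianC]
  rw [show (fun w : ℂ => ENNReal.ofReal (π⁻¹ * Real.exp (-(‖w‖) ^ 2)))
      = (fun w : ℂ => ((π⁻¹ * Real.exp (-(‖w‖) ^ 2)).toNNReal : ℝ≥0∞)) from rfl]
  rw [integral_withDensity_eq_integral_smul
    (by exact rho_cont.measurable.real_toNNReal) f]
  congr 1; funext w
  rw [NNReal.smul_def, smul_eq_mul, Real.coe_toNNReal _ (rho_nonneg w)]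

lemma gaussianC_integrable_iff (f : ℂ → ℝ) :
    Integrable f gaussianC ↔
      Integrable (fun w : ℂ => (π⁻¹ * Real.exp (-(‖w‖) ^ 2)) * f w) volume := by
  rw [gaussianC]
  rw [show (fun w : ℂ => ENNReal.ofReal (π⁻¹ * Real.exp (-(‖w‖) ^ 2)))
      = (fun w : ℂ => ((π⁻¹ * Real.exp (-(‖w‖) ^ 2)).toNNReal : ℝ≥0∞)) from rfl]
  rw [integrable_withDensity_iff_integrable_smul
    (by exact rho_cont.measurable.real_toNNReal)]
  have he : ∀ w : ℂ, ((π⁻¹ * Real.exp (-(‖w‖) ^ 2)).toNNReal : ℝ≥0) • f w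
      = (π⁻¹ * Real.exp (-(‖w‖) ^ 2)) * f w := by
    intro w
    rw [NNReal.smul_def, smul_eq_mul, Real.coe_toNNReal _ (rho_nonneg w)]
  constructor
  · intro h
    exact h.congr (Filter.Eventually.of_forall fun w => by simpa using he w)
  · intro h
    exact h.congr (Filter.Eventually.of_forall fun w => by simpa using (he w).symm)

lemma gaussianC_sq_integrable : Integrable (fun w : ℂ => ‖w‖ ^ 2) gaussianC := by
  rw [gaussianC_integrable_iff]
  refine (integrableC_sq_gauss.const_mul π⁻¹).congr (Filter.Eventually.of_forall fun w => ?_)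
  ring

lemma gaussianC_sq_integral : ∫ w, ‖w‖ ^ 2 ∂gaussianC = 1 := by
  rw [gaussianC_integral_eq]
  have : (fun w : ℂ => (π⁻¹ * Real.exp (-(‖w‖) ^ 2)) * ‖w‖ ^ 2)
      = fun w : ℂ => π⁻¹ * (‖w‖ ^ 2 * Real.exp (-(‖w‖) ^ 2)) := by
    funext w; ring
  rw [this, integral_const_mul, intC_sq_gauss, inv_mul_cancel₀ pi_pos.ne']

/-- The expectation term
`g_i(σ, s) = ∫_ℂ log₂( Σ_j exp( −|σ·w + √s·(x i − x j)|² / σ² ) ) dγ(w)`. -/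
noncomputable def g (M : ℕ) (x : Fin M → ℂ) (σ s : ℝ) (i : Fin M) : ℝ :=
  ∫ w : ℂ,
    Real.logb 2 (∑ j : Fin M,
      Real.exp (-(‖(σ : ℂ) * w + (Real.sqrt s : ℂ) * (x i - x j)‖) ^ 2 / σ ^ 2))
    ∂gaussianC

/-- The constellation-constrained secrecy capacity
`C_σ(s) = (1/M)·Σ_i ( g_i(σ, s) − g_i(1, s) )`. -/
noncomputable def Ccc (M : ℕ) (x : Fin M → ℂ) (σ s : ℝ) : ℝ :=
  (1 / (M : ℝ)) * ∑ i : Fin M, (g M x σ s i - g M x 1 s i)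

lemma tendsto_sqrt_atTop : Tendsto Real.sqrt atTop atTop := by
  rw [tendsto_atTop_atTop]
  intro b
  refine ⟨b ^ 2, fun a ha => ?_⟩
  have h1 : Real.sqrt (b ^ 2) ≤ Real.sqrt a := Real.sqrt_le_sqrt ha
  rw [Real.sqrt_sq_eq_abs] at h1
  exact (le_abs_self b).trans h1

lemma g_tendsto (M : ℕ) (hM : 1 ≤ M) (x : Fin M → ℂ) (hx : Function.Injective x)
    (σ : ℝ) (hσ : 0 < σ) (i : Fin M) :
    Tendsto (fun s => g M x σ s i) atTop (nhds (-(1 / Real.log 2))) := by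
  set S : ℝ → ℂ → ℝ := fun s w => ∑ j : Fin M,
      Real.exp (-(‖(σ : ℂ) * w + (Real.sqrt s : ℂ) * (x i - x j)‖) ^ 2 / σ ^ 2)
    with hS
  have hσ2 : (0:ℝ) < σ ^ 2 := by positivity
  have hlog2 : (0:ℝ) < Real.log 2 := Real.log_pos one_lt_two
  -- the i-th term is constant
  have htermi : ∀ s w, Real.exp (-(‖(σ : ℂ) * w
        + (Real.sqrt s : ℂ) * (x i - x i)‖) ^ 2 / σ ^ 2)
      = Real.exp (-(‖w‖) ^ 2) := by
    intro s w
    have : (σ : ℂ) * w + (Real.sqrt s : ℂ) * (x i - x i) = (σ : ℂ) * w := by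
      simp
    rw [this]
    congr 1
    rw [norm_mul, Complex.norm_real, Real.norm_eq_abs, abs_of_pos hσ]
    field_simp
  -- lower bound for S
  have hSlow : ∀ s w, Real.exp (-(‖w‖) ^ 2) ≤ S s w := by
    intro s w
    rw [← htermi s w]
    exact Finset.single_le_sum (f := fun j => Real.exp
      (-(‖(σ : ℂ) * w + (Real.sqrt s : ℂ) * (x i - x j)‖) ^ 2 / σ ^ 2))
      (fun j _ => (Real.exp_pos _).le) (Finset.mem_univ i)
  have hSpos : ∀ s w, 0 < S s w := fun s w => lt_of_lt_of_le (Real.exp_pos _) (hSlow s w)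
  -- upper bound for S
  have hSup : ∀ s w, S s w ≤ (M : ℝ) := by
    intro s w
    calc S s w ≤ ∑ _j : Fin M, (1:ℝ) := by
          refine Finset.sum_le_sum fun j _ => ?_
          rw [Real.exp_le_one_iff]
          exact div_nonpos_of_nonpos_of_nonneg (neg_nonpos.mpr (sq_nonneg _)) hσ2.le
      _ = (M : ℝ) := by simp
  -- continuity / measurability in w
  have hScont : ∀ s, Continuous (S s) := by
    intro s
    apply continuous_finset_sum
    intro j _
    apply Real.continuous_exp.comp
    apply Continuous.div_const
    apply Continuous.neg
    exact (continuous_norm.comp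
      ((continuous_const.mul continuous_id).add continuous_const)).pow 2
  have hmeas : ∀ s, AEStronglyMeasurable (fun w => Real.logb 2 (S s w)) gaussianC := by
    intro s
    have : Measurable fun w => Real.logb 2 (S s w) := by
      simp only [Real.logb]
      exact (Real.measurable_log.comp (hScont s).measurable).div_const _
    exact this.aestronglyMeasurable
  -- bound
  have hbd : ∀ s, ∀ᵐ w ∂gaussianC, ‖Real.logb 2 (S s w)‖
      ≤ Real.logb 2 M + ‖w‖ ^ 2 / Real.log 2 := by
    intro s
    refine Filter.Eventually.of_forall fun w => ?_
    rw [Real.norm_eq_abs, abs_le]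
    have hMlog : 0 ≤ Real.logb 2 M := Real.logb_nonneg one_lt_two (by exact_mod_cast hM)
    have hw2 : 0 ≤ ‖w‖ ^ 2 / Real.log 2 := by positivity
    constructor
    · have h1 : Real.logb 2 (Real.exp (-(‖w‖) ^ 2)) ≤ Real.logb 2 (S s w) :=
        Real.logb_le_logb_of_le one_lt_two (Real.exp_pos _) (hSlow s w)
      have h2 : Real.logb 2 (Real.exp (-(‖w‖) ^ 2))
          = -(‖w‖ ^ 2 / Real.log 2) := by
        simp [Real.logb, Real.log_exp, neg_div]
      nlinarith [h1, h2, hMlog]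
    · have h1 : Real.logb 2 (S s w) ≤ Real.logb 2 M :=
        Real.logb_le_logb_of_le one_lt_two (hSpos s w) (hSup s w)
      linarith
  -- integrable bound
  have hbint : Integrable (fun w : ℂ => Real.logb 2 M + ‖w‖ ^ 2 / Real.log 2)
      gaussianC :=
    (integrable_const _).add (gaussianC_sq_integrable.div_const _)
  -- pointwise limit
  have hlim : ∀ᵐ w ∂gaussianC, Tendsto (fun s => Real.logb 2 (S s w)) atTop
      (nhds (-(‖w‖) ^ 2 / Real.log 2)) := by
    refine Filter.Eventually.of_forall fun w => ?_
    have hsum : Tendsto (fun s => S s w) atTop (nhds (Real.exp (-(‖w‖) ^ 2))) := by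
      have hval : Real.exp (-(‖w‖) ^ 2)
          = ∑ j : Fin M, if j = i then Real.exp (-(‖w‖) ^ 2) else 0 := by
        rw [Finset.sum_ite_eq' Finset.univ i (fun _ => Real.exp (-(‖w‖) ^ 2))]
        simp
      rw [hval, hS]
      apply tendsto_finset_sum
      intro j _
      by_cases hj : j = i
      · subst hj
        simp only [if_pos rfl]
        have : (fun s => Real.exp (-(‖(σ : ℂ) * w
            + (Real.sqrt s : ℂ) * (x j - x j)‖) ^ 2 / σ ^ 2))
            = fun _ => Real.exp (-(‖w‖) ^ 2) := by
          funext s; exact htermi s w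
        rw [this]
        exact tendsto_const_nhds
      · rw [if_neg hj]
        have hd : x i - x j ≠ 0 := sub_ne_zero.mpr (hx.ne (fun h => hj h.symm))
        set d : ℂ := x i - x j with hdd
        have hdpos : 0 < ‖d‖ := by
          simpa using (norm_pos_iff.mpr hd)
        -- abs tends to atTop
        have habs : Tendsto (fun s => ‖(σ : ℂ) * w + (Real.sqrt s : ℂ) * d‖)
            atTop atTop := by
          apply tendsto_atTop_mono (f := fun s =>
            Real.sqrt s * ‖d‖ - σ * ‖w‖)
          · intro s
            have h1 : ‖(Real.sqrt s : ℂ) * d‖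
                ≤ ‖(σ : ℂ) * w + (Real.sqrt s : ℂ) * d‖
                  + ‖(σ : ℂ) * w‖ := by
              have := norm_add_le
                ((σ : ℂ) * w + (Real.sqrt s : ℂ) * d) (-((σ : ℂ) * w))
              simpa using this
            have h2 : ‖(Real.sqrt s : ℂ) * d‖
                = Real.sqrt s * ‖d‖ := by
              rw [norm_mul, Complex.norm_real, Real.norm_eq_abs, abs_of_nonneg (Real.sqrt_nonneg s)]
            have h3 : ‖(σ : ℂ) * w‖ = σ * ‖w‖ := by
              rw [norm_mul, Complex.norm_real, Real.norm_eq_abs, abs_of_pos hσ]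
            linarith
          · have h4 : Tendsto (fun s => Real.sqrt s * ‖d‖) atTop atTop :=
              Tendsto.atTop_mul_const hdpos _root_.tendsto_sqrt_atTop
            simpa [sub_eq_add_neg] using tendsto_atTop_add_const_right atTop
              (-(σ * ‖w‖)) h4
        have hsq : Tendsto (fun s =>
            (‖(σ : ℂ) * w + (Real.sqrt s : ℂ) * d‖) ^ 2 / σ ^ 2) atTop atTop := by
          apply Tendsto.atTop_div_const hσ2
          have := Filter.Tendsto.atTop_mul_atTop₀ habs habs
          simpa [pow_two] using this
        have hneg : Tendsto (fun s =>
            -(‖(σ : ℂ) * w + (Real.sqrt s : ℂ) * d‖) ^ 2 / σ ^ 2) atTop atBot := by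
          simp only [neg_div]
          exact Filter.tendsto_neg_atBot_iff.mpr hsq
        exact Real.tendsto_exp_atBot.comp hneg
    have hcont : ContinuousAt (fun y => Real.logb 2 y) (Real.exp (-(‖w‖) ^ 2)) := by
      simp only [Real.logb]
      exact (Real.continuousAt_log (Real.exp_pos _).ne').div_const _
    have := hcont.tendsto.comp hsum
    have hval2 : Real.logb 2 (Real.exp (-(‖w‖) ^ 2))
        = -(‖w‖) ^ 2 / Real.log 2 := by
      simp [Real.logb, Real.log_exp]
    rw [hval2] at this
    exact this
  have key := tendsto_integral_filter_of_dominated_convergence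
    (μ := gaussianC) (F := fun s w => Real.logb 2 (S s w))
    (f := fun w => -(‖w‖) ^ 2 / Real.log 2)
    (bound := fun w => Real.logb 2 M + ‖w‖ ^ 2 / Real.log 2)
    (Filter.Eventually.of_forall hmeas) (Filter.Eventually.of_forall hbd) hbint hlim
  have hval3 : ∫ w, -(‖w‖) ^ 2 / Real.log 2 ∂gaussianC = -(1 / Real.log 2) := by
    simp_rw [neg_div]
    rw [integral_neg, integral_div, gaussianC_sq_integral, one_div]
  rw [hval3] at key
  exact key

theorem cc_mutual_info_tendsto_logM (M : ℕ) (hM : 1 ≤ M) (x : Fin M → ℂ)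
    (hx : Function.Injective x) (σ : ℝ) (hσ : 0 < σ) :
    Filter.Tendsto
      (fun s => Real.logb 2 M - Real.logb 2 (Real.exp 1)
        - (1 / (M : ℝ)) * ∑ i : Fin M, g M x σ s i)
      Filter.atTop (nhds (Real.logb 2 M)) := by
  have hM0 : (0:ℝ) < (M : ℝ) := by exact_mod_cast Nat.lt_of_lt_of_le Nat.zero_lt_one hM
  have hsum : Tendsto (fun s => ∑ i : Fin M, g M x σ s i) atTop
      (nhds (∑ _i : Fin M, -(1 / Real.log 2))) :=
    tendsto_finset_sum _ (fun i _ => g_tendsto M hM x hx σ hσ i)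
  have hval : ∑ _i : Fin M, -(1 / Real.log 2) = (M : ℝ) * (-(1 / Real.log 2)) := by
    rw [Finset.sum_const, Finset.card_univ, Fintype.card_fin, nsmul_eq_mul]
  rw [hval] at hsum
  have h2 : Tendsto (fun s => Real.logb 2 M - Real.logb 2 (Real.exp 1)
      - (1 / (M : ℝ)) * ∑ i : Fin M, g M x σ s i) atTop
      (nhds (Real.logb 2 M - Real.logb 2 (Real.exp 1)
        - (1 / (M : ℝ)) * ((M : ℝ) * (-(1 / Real.log 2))))) :=
    Filter.Tendsto.const_sub _ (hsum.const_mul _)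
  have h3 : Real.logb 2 M - Real.logb 2 (Real.exp 1)
      - (1 / (M : ℝ)) * ((M : ℝ) * (-(1 / Real.log 2))) = Real.logb 2 M := by
    have hlogb : Real.logb 2 (Real.exp 1) = 1 / Real.log 2 := by
      simp [Real.logb, Real.log_exp, one_div]
    rw [hlogb]
    field_simp
    ring
  rw [h3] at h2
  exact h2
end

section
/- Let M ≥ 1, x : Fin M → ℂ, σ > 0 and s ≥ 0, and let p : ℂ → ℝ be the output density p(y) = (1/(M·π·σ²))·Σ_{i=0}^{M−1} exp( −|y − √s·x i|² / σ² ). Then the differential entropy of the channel output satisfies −∫_ℂ p(y)·log₂ p(y) dy = log₂ M + log₂(π·σ²) − (1/M)·Σ_{i=0}^{M−1} g_i(σ, s), where the integral is with respect to Lebesgue measure on ℂ ≅ ℝ². -/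
open MeasureTheory Real NNReal ENNReal

lemma integral_complex_eq_s12 {E : Type*} [NormedAddCommGroup E] [NormedSpace ℝ E] (f : ℂ → E) :
    ∫ z : ℂ, f z = ∫ q : ℝ × ℝ, f (Complex.measurableEquivRealProd.symm q) :=
  ((Complex.volume_preserving_equiv_real_prod.symm).integral_comp
    Complex.measurableEquivRealProd.symm.measurableEmbedding f).symm

lemma integrable_complex_iff_s12 (f : ℂ → ℝ) :
    Integrable f ↔ Integrable (fun q : ℝ × ℝ => f (Complex.measurableEquivRealProd.symm q)) :=
  ((Complex.volume_preserving_equiv_real_prod.symm).integrable_comp_emb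
    Complex.measurableEquivRealProd.symm.measurableEmbedding).symm

lemma abs_symm_sq (q : ℝ × ℝ) :
    ‖Complex.measurableEquivRealProd.symm q‖ ^ 2 = q.1 ^ 2 + q.2 ^ 2 := by
  rw [Complex.sq_norm, Complex.measurableEquivRealProd_symm_apply]
  simp [Complex.normSq_mk]; ring

lemma gaussC_integral {b : ℝ} (hb : 0 < b) :
    ∫ z : ℂ, Real.exp (-b * ‖z‖ ^ 2) = π / b := by
  rw [integral_complex_eq_s12]
  have : ∀ q : ℝ × ℝ, Real.exp (-b * ‖Complex.measurableEquivRealProd.symm q‖ ^ 2)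
      = Real.exp (-b * q.1 ^ 2) * Real.exp (-b * q.2 ^ 2) := by
    intro q; rw [abs_symm_sq, ← Real.exp_add]; ring_nf
  rw [integral_congr_ae (Filter.Eventually.of_forall this), Measure.volume_eq_prod ℝ ℝ,
    integral_prod_mul (fun x : ℝ => Real.exp (-b * x ^ 2)) (fun x : ℝ => Real.exp (-b * x ^ 2)),
    integral_gaussian]
  exact Real.mul_self_sqrt (by positivity)

lemma gaussC_integrable {b : ℝ} (hb : 0 < b) :
    Integrable (fun z : ℂ => Real.exp (-b * ‖z‖ ^ 2)) := by
  rw [integrable_complex_iff_s12]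
  have h := (integrable_exp_neg_mul_sq hb).mul_prod (integrable_exp_neg_mul_sq hb)
  rw [← Measure.volume_eq_prod ℝ ℝ] at h
  refine h.congr (Filter.Eventually.of_forall fun q => ?_)
  dsimp only
  rw [abs_symm_sq, ← Real.exp_add]; ring_nf

lemma gaussC_mom_integrable {b : ℝ} (hb : 0 < b) :
    Integrable (fun z : ℂ => ‖z‖ ^ 2 * Real.exp (-b * ‖z‖ ^ 2)) := by
  have hpow : Integrable (fun x : ℝ => x ^ 2 * Real.exp (-b * x ^ 2)) := by
    have := integrable_rpow_mul_exp_neg_mul_sq hb (by norm_num : (-1:ℝ) < 2)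
    simpa [Real.rpow_two] using this
  rw [integrable_complex_iff_s12]
  have h1 := (hpow.mul_prod (integrable_exp_neg_mul_sq hb))
  have h2 := ((integrable_exp_neg_mul_sq hb).mul_prod hpow)
  rw [← Measure.volume_eq_prod ℝ ℝ] at h1 h2
  refine (h1.add h2).congr (Filter.Eventually.of_forall fun q => ?_)
  simp only [Pi.add_apply]
  rw [abs_symm_sq]
  rw [show -b * (q.1 ^ 2 + q.2 ^ 2) = -b * q.1 ^ 2 + -b * q.2 ^ 2 by ring, Real.exp_add]
  ring

lemma q_int {b : ℝ} (hb : 0 < b) (c0 : ℂ) :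
    Integrable (fun y : ℂ => Real.exp (-b * ‖y - c0‖ ^ 2)) := by
  simpa using (gaussC_integrable hb).comp_sub_right c0

lemma q_integral {b : ℝ} (hb : 0 < b) (c0 : ℂ) :
    ∫ y : ℂ, Real.exp (-b * ‖y - c0‖ ^ 2) = π / b := by
  rw [← gaussC_integral hb]
  exact integral_sub_right_eq_self (fun z : ℂ => Real.exp (-b * ‖z‖ ^ 2)) c0

lemma mom_int {b : ℝ} (hb : 0 < b) (c0 : ℂ) :
    Integrable (fun y : ℂ =>
      ‖y - c0‖ ^ 2 * Real.exp (-b * ‖y - c0‖ ^ 2)) := by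
  simpa using (gaussC_mom_integrable hb).comp_sub_right c0


lemma integral_gaussianC (G : ℂ → ℝ) :
    ∫ w, G w ∂gaussianC = ∫ w : ℂ, (π⁻¹ * Real.exp (-(‖w‖) ^ 2)) * G w := by
  have hmeas : Measurable fun w : ℂ => Real.toNNReal (π⁻¹ * Real.exp (-(‖w‖) ^ 2)) := by
    exact (continuous_real_toNNReal.comp
      ((continuous_const.mul ((Real.continuous_exp.comp
        ((continuous_norm.pow 2).neg)))))).measurable
  have : gaussianC = MeasureTheory.volume.withDensity
      (fun w => ((Real.toNNReal (π⁻¹ * Real.exp (-(‖w‖) ^ 2)) : ℝ≥0) : ℝ≥0∞)) := rfl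
  rw [this, integral_withDensity_eq_integral_smul hmeas]
  refine integral_congr_ae (Filter.Eventually.of_forall fun w => ?_)
  dsimp only
  rw [NNReal.smul_def, smul_eq_mul, Real.coe_toNNReal _ (by positivity)]

/-- The sum `S`. -/
noncomputable def Sd (M : ℕ) (x : Fin M → ℂ) (σ s : ℝ) (y : ℂ) : ℝ :=
  ∑ i : Fin M, Real.exp (-(‖y - (Real.sqrt s : ℂ) * x i‖) ^ 2 / σ ^ 2)

lemma exp_form {σ : ℝ} (A : ℝ) : Real.exp (-A ^ 2 / σ ^ 2) = Real.exp (-(σ ^ 2)⁻¹ * A ^ 2) := by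
  congr 1; ring

section main
variable (M : ℕ) (x : Fin M → ℂ) (σ s : ℝ)

lemma Sd_pos [NeZero M] (y : ℂ) : 0 < Sd M x σ s y :=
  Finset.sum_pos (fun i _ => Real.exp_pos _) ⟨⟨0, Nat.pos_of_ne_zero (NeZero.ne M)⟩,
    Finset.mem_univ _⟩

lemma Sd_le (y : ℂ) : Sd M x σ s y ≤ M := by
  have : ∀ i ∈ Finset.univ, Real.exp (-(‖y - (Real.sqrt s : ℂ) * x i‖) ^ 2 / σ ^ 2)
      ≤ 1 := by
    intro i _
    apply Real.exp_le_one_iff.2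
    have h1 : (0:ℝ) ≤ (‖y - (Real.sqrt s : ℂ) * x i‖) ^ 2 := sq_nonneg _
    have h2 : (0:ℝ) ≤ σ ^ 2 := sq_nonneg _
    exact div_nonpos_of_nonpos_of_nonneg (neg_nonpos.2 h1) h2
  calc Sd M x σ s y ≤ ∑ _i : Fin M, (1:ℝ) := Finset.sum_le_sum this
    _ = M := by simp

lemma Sd_cont : Continuous (Sd M x σ s) := by
  apply continuous_finset_sum
  intro i _
  apply Real.continuous_exp.comp
  apply Continuous.div_const
  exact ((continuous_norm.comp (continuous_id.sub continuous_const)).pow 2).neg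

lemma logb_Sd_cont [NeZero M] : Continuous fun y => Real.logb 2 (Sd M x σ s y) := by
  simp only [Real.logb]
  exact ((Sd_cont M x σ s).log fun y => (Sd_pos M x σ s y).ne').div_const _

end main

section main2
variable {M : ℕ} [NeZero M] {x : Fin M → ℂ} {σ : ℝ} {s : ℝ}

lemma qlog_int (hσ : 0 < σ) (i : Fin M) :
    Integrable (fun y : ℂ =>
      Real.exp (-(‖y - (Real.sqrt s : ℂ) * x i‖) ^ 2 / σ ^ 2) *
        Real.logb 2 (Sd M x σ s y)) := by
  have hb : (0:ℝ) < (σ ^ 2)⁻¹ := by positivity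
  have h2 : (0:ℝ) < Real.log 2 := Real.log_pos one_lt_two
  have hM1 : (1:ℝ) ≤ M := by exact_mod_cast Nat.one_le_iff_ne_zero.2 (NeZero.ne M)
  apply Integrable.mono'
    (g := fun y => (Real.log 2)⁻¹ *
      (Real.exp (-(σ ^ 2)⁻¹ * ‖y - (Real.sqrt s : ℂ) * x i‖ ^ 2) * Real.log M
        + (σ ^ 2)⁻¹ * (‖y - (Real.sqrt s : ℂ) * x i‖ ^ 2 *
            Real.exp (-(σ ^ 2)⁻¹ * ‖y - (Real.sqrt s : ℂ) * x i‖ ^ 2))))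
  · exact (((q_int hb _).mul_const _).add ((mom_int hb _).const_mul _)).const_mul _
  · apply Continuous.aestronglyMeasurable
    apply Continuous.mul _ (logb_Sd_cont M x σ s)
    apply Real.continuous_exp.comp
    apply Continuous.div_const
    exact ((continuous_norm.comp (continuous_id.sub continuous_const)).pow 2).neg
  · filter_upwards with y
    have hSy := Sd_pos M x σ s y
    have hSle := Sd_le M x σ s y
    have hD0 : (0:ℝ) ≤ (σ ^ 2)⁻¹ * ‖y - (Real.sqrt s : ℂ) * x i‖ ^ 2 := by positivity
    have hlow : -((σ ^ 2)⁻¹ * ‖y - (Real.sqrt s : ℂ) * x i‖ ^ 2)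
        ≤ Real.log (Sd M x σ s y) := by
      have hle : Real.exp (-(σ ^ 2)⁻¹ * ‖y - (Real.sqrt s : ℂ) * x i‖ ^ 2)
          ≤ Sd M x σ s y := by
        have : Real.exp (-(‖y - (Real.sqrt s : ℂ) * x i‖) ^ 2 / σ ^ 2)
            ≤ Sd M x σ s y :=
          Finset.single_le_sum (f := fun j : Fin M =>
            Real.exp (-(‖y - (Real.sqrt s : ℂ) * x j‖) ^ 2 / σ ^ 2))
            (fun j _ => (Real.exp_pos _).le) (Finset.mem_univ i)
        rw [exp_form] at this
        exact this
      calc -((σ ^ 2)⁻¹ * ‖y - (Real.sqrt s : ℂ) * x i‖ ^ 2)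
          = Real.log (Real.exp (-(σ ^ 2)⁻¹ *
              ‖y - (Real.sqrt s : ℂ) * x i‖ ^ 2)) := by rw [Real.log_exp]; ring
        _ ≤ Real.log (Sd M x σ s y) := Real.log_le_log (Real.exp_pos _) hle
    have hup : Real.log (Sd M x σ s y) ≤ Real.log M := Real.log_le_log hSy hSle
    have hlogM0 : (0:ℝ) ≤ Real.log M := Real.log_nonneg hM1
    have habs : |Real.log (Sd M x σ s y)|
        ≤ Real.log M + (σ ^ 2)⁻¹ * ‖y - (Real.sqrt s : ℂ) * x i‖ ^ 2 :=
      abs_le.2 ⟨by linarith, by linarith⟩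
    rw [Real.norm_eq_abs, abs_mul, abs_of_nonneg (Real.exp_pos _).le, Real.logb, abs_div,
      abs_of_nonneg h2.le, exp_form]
    have key := mul_le_mul_of_nonneg_left habs
      (Real.exp_pos (-(σ ^ 2)⁻¹ * ‖y - (Real.sqrt s : ℂ) * x i‖ ^ 2)).le
    rw [div_eq_mul_inv, ← mul_assoc, mul_comm ((Real.log 2)⁻¹)]
    apply mul_le_mul_of_nonneg_right _ (inv_nonneg.2 h2.le)
    nlinarith [key]
end main2

section main3
variable {M : ℕ} [NeZero M] {x : Fin M → ℂ} {σ : ℝ} {s : ℝ}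

lemma qlog_integral (hσ : 0 < σ) (i : Fin M) :
    ∫ y : ℂ, Real.exp (-(‖y - (Real.sqrt s : ℂ) * x i‖) ^ 2 / σ ^ 2) *
      Real.logb 2 (Sd M x σ s y) = π * σ ^ 2 * g M x σ s i := by
  have hσ2 : (σ:ℝ) ^ 2 ≠ 0 := by positivity
  set c0 : ℂ := (Real.sqrt s : ℂ) * x i with hc0
  set F : ℂ → ℝ := fun y =>
    Real.exp (-(‖y - c0‖) ^ 2 / σ ^ 2) * Real.logb 2 (Sd M x σ s y) with hF
  set L : ℂ → ℝ := fun w => Real.logb 2 (∑ j : Fin M,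
    Real.exp (-(‖(σ : ℂ) * w + (Real.sqrt s : ℂ) * (x i - x j)‖) ^ 2 / σ ^ 2))
    with hL
  have t3 : ∀ w : ℂ, F (σ • w + c0) = Real.exp (-(‖w‖) ^ 2) * L w := by
    intro w
    rw [hF]
    dsimp only
    congr 1
    · rw [add_sub_cancel_right, Complex.real_smul, norm_mul, Complex.norm_real, Real.norm_eq_abs,
        abs_of_pos hσ]
      congr 1
      field_simp
    · rw [hL]
      dsimp only
      congr 1
      rw [Sd]
      refine Finset.sum_congr rfl fun j _ => ?_
      congr 3
      rw [Complex.real_smul, hc0]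
      ring
  have t1 : (∫ y : ℂ, F y) = ∫ w : ℂ, F (w + c0) :=
    (integral_add_right_eq_self F c0).symm
  have t2 : (∫ w : ℂ, F (w + c0)) = (σ ^ 2) * ∫ w : ℂ, F (σ • w + c0) := by
    have h := Measure.integral_comp_smul_of_nonneg (volume : Measure ℂ)
      (fun w => F (w + c0)) σ (hR := hσ.le)
    rw [Complex.finrank_real_complex] at h
    simp only [smul_eq_mul] at h
    rw [h, ← mul_assoc, mul_inv_cancel₀ hσ2, one_mul]
  have t4 : (∫ w : ℂ, Real.exp (-(‖w‖) ^ 2) * L w) = π * g M x σ s i := by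
    rw [g, integral_gaussianC]
    rw [← integral_const_mul]
    refine integral_congr_ae (Filter.Eventually.of_forall fun w => ?_)
    rw [hL]
    dsimp only
    rw [← mul_assoc, ← mul_assoc, mul_inv_cancel₀ Real.pi_ne_zero, one_mul]
  calc (∫ y : ℂ, F y) = (σ ^ 2) * ∫ w : ℂ, F (σ • w + c0) := by rw [t1, t2]
    _ = (σ ^ 2) * ∫ w : ℂ, Real.exp (-(‖w‖) ^ 2) * L w := by
        congr 1
        exact integral_congr_ae (Filter.Eventually.of_forall t3)
    _ = π * σ ^ 2 * g M x σ s i := by rw [t4]; ring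

end main3

theorem output_differential_entropy (M : ℕ) (hM : 1 ≤ M) (x : Fin M → ℂ)
    (σ : ℝ) (hσ : 0 < σ) (s : ℝ) (hs : 0 ≤ s) (p : ℂ → ℝ)
    (hp : ∀ y : ℂ, p y = (1 / (M * π * σ ^ 2)) *
      ∑ i : Fin M, Real.exp (-(‖y - (Real.sqrt s : ℂ) * x i‖) ^ 2 / σ ^ 2)) :
    -∫ y : ℂ, p y * Real.logb 2 (p y) =
      Real.logb 2 M + Real.logb 2 (π * σ ^ 2)
        - (1 / (M : ℝ)) * ∑ i : Fin M, g M x σ s i := by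
  haveI : NeZero M := ⟨by omega⟩
  have hb : (0:ℝ) < (σ ^ 2)⁻¹ := by positivity
  have hM0 : (0:ℝ) < M := by exact_mod_cast Nat.pos_of_ne_zero (NeZero.ne M)
  have hπσ : (0:ℝ) < π * σ ^ 2 := by positivity
  have hC : (0:ℝ) < 1 / (M * π * σ ^ 2) := by positivity
  have hterm_int : ∀ j : Fin M, Integrable (fun y : ℂ =>
      Real.exp (-(‖y - (Real.sqrt s : ℂ) * x j‖) ^ 2 / σ ^ 2)) := by
    intro j
    exact (q_int hb ((Real.sqrt s : ℂ) * x j)).congr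
      (Filter.Eventually.of_forall fun y => (exp_form _).symm)
  have hterm_integral : ∀ j : Fin M, (∫ y : ℂ,
      Real.exp (-(‖y - (Real.sqrt s : ℂ) * x j‖) ^ 2 / σ ^ 2)) = π * σ ^ 2 := by
    intro j
    rw [integral_congr_ae (Filter.Eventually.of_forall fun y => exp_form _),
      q_integral hb ((Real.sqrt s : ℂ) * x j)]
    field_simp
  have hSd_int : Integrable (Sd M x σ s) := by
    have : Sd M x σ s = fun y => ∑ j : Fin M,
        Real.exp (-(‖y - (Real.sqrt s : ℂ) * x j‖) ^ 2 / σ ^ 2) := rfl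
    rw [this]
    exact integrable_finset_sum _ fun j _ => hterm_int j
  have hSd_integral : (∫ y : ℂ, Sd M x σ s y) = M * (π * σ ^ 2) := by
    calc (∫ y : ℂ, Sd M x σ s y)
        = ∑ j : Fin M, ∫ y : ℂ,
            Real.exp (-(‖y - (Real.sqrt s : ℂ) * x j‖) ^ 2 / σ ^ 2) :=
          integral_finset_sum _ fun j _ => hterm_int j
      _ = ∑ _j : Fin M, π * σ ^ 2 := Finset.sum_congr rfl fun j _ => hterm_integral j
      _ = M * (π * σ ^ 2) := by simp [mul_comm]
  have hSl_int : Integrable (fun y : ℂ => Sd M x σ s y * Real.logb 2 (Sd M x σ s y)) := by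
    have : (fun y : ℂ => Sd M x σ s y * Real.logb 2 (Sd M x σ s y))
        = fun y => ∑ j : Fin M,
            Real.exp (-(‖y - (Real.sqrt s : ℂ) * x j‖) ^ 2 / σ ^ 2) *
              Real.logb 2 (Sd M x σ s y) := by
      funext y; rw [Sd, Finset.sum_mul]
    rw [this]
    exact integrable_finset_sum _ fun j _ => qlog_int hσ j
  have hSl_integral : (∫ y : ℂ, Sd M x σ s y * Real.logb 2 (Sd M x σ s y))
      = π * σ ^ 2 * ∑ i : Fin M, g M x σ s i := by
    have h1 : (fun y : ℂ => Sd M x σ s y * Real.logb 2 (Sd M x σ s y))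
        = fun y => ∑ j : Fin M,
            Real.exp (-(‖y - (Real.sqrt s : ℂ) * x j‖) ^ 2 / σ ^ 2) *
              Real.logb 2 (Sd M x σ s y) := by
      funext y; rw [Sd, Finset.sum_mul]
    rw [h1, integral_finset_sum _ fun j _ => qlog_int hσ j]
    rw [Finset.mul_sum]
    exact Finset.sum_congr rfl fun j _ => qlog_integral hσ j
  have hrw : ∀ y : ℂ, p y * Real.logb 2 (p y)
      = Real.logb 2 (1 / ((M:ℝ) * π * σ ^ 2)) * ((1 / ((M:ℝ) * π * σ ^ 2)) * Sd M x σ s y)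
        + (1 / ((M:ℝ) * π * σ ^ 2)) * (Sd M x σ s y * Real.logb 2 (Sd M x σ s y)) := by
    intro y
    have hpy : p y = (1 / ((M:ℝ) * π * σ ^ 2)) * Sd M x σ s y := hp y
    rw [hpy, Real.logb_mul hC.ne' (Sd_pos M x σ s y).ne']
    ring
  rw [integral_congr_ae (Filter.Eventually.of_forall hrw),
    integral_add ((hSd_int.const_mul _).const_mul _) (hSl_int.const_mul _),
    integral_const_mul, integral_const_mul, integral_const_mul, hSd_integral, hSl_integral]
  have hlogC : Real.logb 2 (1 / ((M:ℝ) * π * σ ^ 2))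
      = -(Real.logb 2 M + Real.logb 2 (π * σ ^ 2)) := by
    rw [one_div, Real.logb_inv, mul_assoc, Real.logb_mul hM0.ne' hπσ.ne']
  rw [hlogC]
  have hcancel : (1 / ((M:ℝ) * π * σ ^ 2)) * ((M:ℝ) * (π * σ ^ 2)) = 1 := by
    field_simp
  have hcancel2 : (1 / ((M:ℝ) * π * σ ^ 2)) * (π * σ ^ 2 * ∑ i : Fin M, g M x σ s i)
      = (1 / (M:ℝ)) * ∑ i : Fin M, g M x σ s i := by
    field_simp
  rw [hcancel, hcancel2]
  ring
end
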